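/- Let G be a graph with minimum degree δ(G) ≥ 1 that has a vertex of degree 1, and suppose G - u is (1,1,2,2)-packing colorable for the vertex u of degree 1. Then G is (1,1,2,2)-packing colorable. -/

import Mathlib

open SimpleGraph

variable {V : Type*}

def square (G : SimpleGraph V) : SimpleGraph V where
  Adj x y := x ≠ y ∧ (G.Adj x y ∨ ∃ z, G.Adj x z ∧ G.Adj z y)
  symm := by
    constructor
    rintro x y ⟨hxy, h | ⟨z, h1, h2⟩⟩
    · exact ⟨hxy.symm, Or.inl h.symm⟩
    · exact ⟨hxy.symm, Or.inr ⟨z, h2.symm, h1.symm⟩⟩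
  loopless := ⟨fun x h => h.1 rfl⟩

/-- Any two distinct vertices of `A` are at distance at least 3 in `G`. -/
def PairwiseDist3 (G : SimpleGraph V) (A : Set V) : Prop :=
  ∀ x ∈ A, ∀ y ∈ A, x ≠ y → ¬ (square G).Adj x y

/-- `A` is an independent set of `G`. -/
def IndepSet (G : SimpleGraph V) (A : Set V) : Prop :=
  ∀ x ∈ A, ∀ y ∈ A, ¬ G.Adj x y

/-- A `(1,1,2,2)`-packing coloring of `G`: a partition of the vertex set into
`V1, V2, V3, V4` where `V1, V2` are independent and any two distinct vertices
of `V3` (resp. `V4`) are at distance at least 3. -/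
def Packing1122 (G : SimpleGraph V) : Prop :=
  ∃ V1 V2 V3 V4 : Set V,
    (∀ v, v ∈ V1 ∨ v ∈ V2 ∨ v ∈ V3 ∨ v ∈ V4) ∧
    Disjoint V1 V2 ∧ Disjoint V1 V3 ∧ Disjoint V1 V4 ∧
    Disjoint V2 V3 ∧ Disjoint V2 V4 ∧ Disjoint V3 V4 ∧
    IndepSet G V1 ∧ IndepSet G V2 ∧ PairwiseDist3 G V3 ∧ PairwiseDist3 G V4

/-- Lifting a `PairwiseDist3` set from `G - u` when `u` has unique neighbor `w`. -/
lemma lift_dist3 (G : SimpleGraph V) (u w : V)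
    (hadj : ∀ x, G.Adj u x ↔ x = w)
    (A : Set ({u}ᶜ : Set V)) (hA : PairwiseDist3 (G.induce ({u}ᶜ : Set V)) A) :
    PairwiseDist3 G (Subtype.val '' A) := by
  rintro x ⟨a, ha, rfl⟩ y ⟨b, hb, rfl⟩ hne ⟨hne', hsq⟩
  have hab : a ≠ b := fun e => hne (by rw [e])
  refine hA a ha b hb hab ⟨hab, ?_⟩
  rcases hsq with h' | ⟨z, h1, h2⟩
  · exact Or.inl h'
  · by_cases hz : z = u
    · subst hz
      have : (a : V) = w := (hadj a).mp h1.symm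
      have : (b : V) = w := (hadj b).mp h2
      exact absurd (Subtype.ext (by simp_all)) hab
    · exact Or.inr ⟨⟨z, by simp [hz]⟩, h1, h2⟩

lemma lift_aux (G : SimpleGraph V) (u w : V)
    (hadj : ∀ x, G.Adj u x ↔ x = w) (hwu : w ≠ u)
    (V1 V2 V3 V4 : Set ({u}ᶜ : Set V))
    (hcov : ∀ v, v ∈ V1 ∨ v ∈ V2 ∨ v ∈ V3 ∨ v ∈ V4)
    (h12 : Disjoint V1 V2) (h13 : Disjoint V1 V3) (h14 : Disjoint V1 V4)
    (h23 : Disjoint V2 V3) (h24 : Disjoint V2 V4) (h34 : Disjoint V3 V4)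
    (hI1 : IndepSet (G.induce ({u}ᶜ : Set V)) V1)
    (hI2 : IndepSet (G.induce ({u}ᶜ : Set V)) V2)
    (hP3 : PairwiseDist3 (G.induce ({u}ᶜ : Set V)) V3)
    (hP4 : PairwiseDist3 (G.induce ({u}ᶜ : Set V)) V4)
    (hw1 : ∀ a : ({u}ᶜ : Set V), (a : V) = w → a ∉ V1) :
    Packing1122 G := by
  have hinj : Function.Injective (Subtype.val : ({u}ᶜ : Set V) → V) := Subtype.val_injective
  have himg : ∀ A B : Set ({u}ᶜ : Set V), Disjoint A B →
      Disjoint (Subtype.val '' A) (Subtype.val '' B) := by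
    intro A B hAB
    rw [Set.disjoint_left]
    rintro x ⟨a, ha, rfl⟩ ⟨b, hb, hba⟩
    exact Set.disjoint_left.mp hAB ha (hinj hba ▸ hb)
  have hu_not : ∀ A : Set ({u}ᶜ : Set V), u ∉ Subtype.val '' A := by
    rintro A ⟨a, _, ha⟩
    exact a.2 (by simp [ha])
  refine ⟨insert u (Subtype.val '' V1), Subtype.val '' V2, Subtype.val '' V3,
    Subtype.val '' V4, ?_, ?_, ?_, ?_, ?_, ?_, ?_, ?_, ?_, ?_, ?_⟩
  · intro v
    by_cases hv : v = u
    · exact Or.inl (by simp [hv])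
    · rcases hcov ⟨v, by simp [hv]⟩ with h | h | h | h
      · exact Or.inl (Set.mem_insert_iff.mpr (Or.inr ⟨_, h, rfl⟩))
      · exact Or.inr (Or.inl ⟨_, h, rfl⟩)
      · exact Or.inr (Or.inr (Or.inl ⟨_, h, rfl⟩))
      · exact Or.inr (Or.inr (Or.inr ⟨_, h, rfl⟩))
  · rw [Set.disjoint_left]
    rintro x (rfl | hx) hy
    exacts [hu_not _ hy, Set.disjoint_left.mp (himg _ _ h12) hx hy]
  · rw [Set.disjoint_left]
    rintro x (rfl | hx) hy
    exacts [hu_not _ hy, Set.disjoint_left.mp (himg _ _ h13) hx hy]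
  · rw [Set.disjoint_left]
    rintro x (rfl | hx) hy
    exacts [hu_not _ hy, Set.disjoint_left.mp (himg _ _ h14) hx hy]
  · exact himg _ _ h23
  · exact himg _ _ h24
  · exact himg _ _ h34
  · -- independence of insert u (V1)
    rintro x hx y hy hxy
    rcases Set.mem_insert_iff.mp hx with rfl | ⟨a, ha, rfl⟩
    · rcases Set.mem_insert_iff.mp hy with rfl | ⟨b, hb, rfl⟩
      · exact G.loopless.irrefl _ hxy
      · exact hw1 b ((hadj b).mp hxy) hb
    · rcases Set.mem_insert_iff.mp hy with rfl | ⟨b, hb, rfl⟩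
      · exact hw1 a ((hadj a).mp hxy.symm) ha
      · exact hI1 a ha b hb hxy
  · rintro x ⟨a, ha, rfl⟩ y ⟨b, hb, rfl⟩ hxy
    exact hI2 a ha b hb hxy
  · exact lift_dist3 G u w hadj V3 hP3
  · exact lift_dist3 G u w hadj V4 hP4

theorem stmt1 [Fintype V] (G : SimpleGraph V) [DecidableRel G.Adj]
    (hmin : ∀ v, 1 ≤ G.degree v) (u : V) (hu : G.degree u = 1)
    (h : Packing1122 (G.induce ({u}ᶜ : Set V))) :
    Packing1122 G := by
  obtain ⟨w, hw⟩ := Finset.card_eq_one.mp (by rwa [← G.card_neighborFinset_eq_degree] at hu)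
  have hadj : ∀ x, G.Adj u x ↔ x = w := by
    intro x
    rw [← mem_neighborFinset, hw, Finset.mem_singleton]
  have hwu : w ≠ u := by
    intro e
    subst e
    exact G.loopless.irrefl w ((hadj w).mpr rfl)
  obtain ⟨V1, V2, V3, V4, hcov, h12, h13, h14, h23, h24, h34, hI1, hI2, hP3, hP4⟩ := h
  by_cases hw1 : (⟨w, by simp [hwu]⟩ : ({u}ᶜ : Set V)) ∈ V1
  · refine lift_aux G u w hadj hwu V2 V1 V3 V4
      (fun v => by rcases hcov v with h | h | h | h <;> tauto)
      h12.symm h23 h24 h13 h14 h34 hI2 hI1 hP3 hP4 ?_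
    intro a haw h2
    have : a = (⟨w, by simp [hwu]⟩ : ({u}ᶜ : Set V)) := Subtype.ext haw
    subst this
    exact Set.disjoint_left.mp h12 hw1 h2
  · refine lift_aux G u w hadj hwu V1 V2 V3 V4 hcov h12 h13 h14 h23 h24 h34 hI1 hI2 hP3 hP4 ?_
    intro a haw h1
    have : a = (⟨w, by simp [hwu]⟩ : ({u}ᶜ : Set V)) := Subtype.ext haw
    subst this
    exact hw1 h1
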